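/- Let d ≥ 2 and q = 2d−1. Let n₁, …, n_{d−1} be pairwise relatively prime positive integers with n₁ even, and let c be an odd positive integer. Define vectors in ℤ^d (with standard basis e₁,…,e_d): u₁ = q·e₁; uᵢ = eᵢ − i·e₁ for odd i with 2 ≤ i ≤ d−1; uᵢ = eᵢ + (q−i)·e₁ for even i with 2 ≤ i ≤ d−1; u_d = e_d. Let Λ ⊂ ℤ^d be the subgroup generated by n₁u₁, …, n_{d−1}u_{d−1}, and c·e_d − Σ_{i=1}^{d−1} uᵢ. Let L̃_{d−1} = {a ∈ ℤ^{d−1} : Σ_{i=1}^{d−1} i·aᵢ ≡ 0 (mod 2d−1)} and K_d = {x ∈ ℤ^d : Σᵢ xᵢ is even} ∪ {x ∈ ℤ^d : (x₁,…,x_{d−1}) ∈ L̃_{d−1}}. Then: (i) K_d + v = K_d for every v ∈ Λ; and (ii) the image of K_d in ℤ^d/Λ is connected under the rook adjacency induced on ℤ^d/Λ. -/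

import Mathlib

/-- The lifted perfect Lee code in `ℤ^(d-1)` with modulus `q = 2d-1`. -/
def memLtil (d : ℕ) (a : Fin (d - 1) → ℤ) : Prop :=
  (2 * (d : ℤ) - 1) ∣ ∑ i : Fin (d - 1), ((i.val : ℤ) + 1) * a i

/-- The pattern `K_d ⊆ ℤ^d`: all cells with even coordinate sum, together with all
cells whose first `d-1` coordinates lie in the lifted code `L̃_{d-1}`. -/
def Kd (d : ℕ) : Set (Fin d → ℤ) :=
  {x | Even (∑ i, x i) ∨ memLtil d fun i => x (Fin.castLE (Nat.sub_le d 1) i)}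

/-- A set `S` is connected under an adjacency relation: it is nonempty and any two
of its elements are joined by a path staying inside `S`. -/
def ConnectedIn {α : Type*} (adj : α → α → Prop) (S : Set α) : Prop :=
  S.Nonempty ∧ ∀ x ∈ S, ∀ y ∈ S,
    Relation.ReflTransGen (fun a b => adj a b ∧ a ∈ S ∧ b ∈ S) x y

/-- Rook adjacency induced on the discrete torus `ℤ^d/Λ`: two classes are adjacent
iff they admit representatives at `ℓ¹`-distance 1. -/
def torusAdj (d : ℕ) (Λ : AddSubgroup (Fin d → ℤ)) (a b : (Fin d → ℤ) ⧸ Λ) : Prop :=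
  ∃ x y : Fin d → ℤ, (QuotientAddGroup.mk x : (Fin d → ℤ) ⧸ Λ) = a ∧
    (QuotientAddGroup.mk y : (Fin d → ℤ) ⧸ Λ) = b ∧ (∑ i, |x i - y i|) = 1

/-- The vectors `u₁, …, u_{d−1}` of the paper, viewed in `ℤ^d` (supported on the first
`d−1` coordinates; 0-indexed: index `j` carries `u_{j+1}`): `u₁ = q·e₁`; for
`2 ≤ i ≤ d−1`, `uᵢ = eᵢ − i·e₁` if `i` is odd and `uᵢ = eᵢ + (q−i)·e₁` if `i` is even,
where `q = 2d−1`. -/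
def uvecZ (d : ℕ) (j : Fin (d - 1)) : Fin d → ℤ :=
  if j.val = 0 then (2 * (d : ℤ) - 1) • Pi.single (Fin.castLE (Nat.sub_le d 1) j) 1
  else if Odd (j.val + 1) then
    Pi.single (Fin.castLE (Nat.sub_le d 1) j) 1 -
      ((j.val : ℤ) + 1) •
        Pi.single (Fin.castLE (Nat.sub_le d 1) (⟨0, j.pos⟩ : Fin (d - 1))) 1
  else
    Pi.single (Fin.castLE (Nat.sub_le d 1) j) 1 +
      (2 * (d : ℤ) - 1 - ((j.val : ℤ) + 1)) •
        Pi.single (Fin.castLE (Nat.sub_le d 1) (⟨0, j.pos⟩ : Fin (d - 1))) 1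

/-- The lattice `Λ ⊆ ℤ^d` generated by `n₁u₁, …, n_{d−1}u_{d−1}` and
`c·e_d − Σ_{i=1}^{d−1} uᵢ` (recall `u_d = e_d`). -/
def latticeLambda (d : ℕ) (hd : 2 ≤ d) (n : Fin (d - 1) → ℕ) (c : ℕ) :
    AddSubgroup (Fin d → ℤ) :=
  AddSubgroup.closure
    ((Set.range fun j : Fin (d - 1) => (n j : ℤ) • uvecZ d j) ∪
      {(c : ℤ) • (Pi.single (⟨d - 1, by omega⟩ : Fin d) 1 : Fin d → ℤ) -
        ∑ j : Fin (d - 1), uvecZ d j})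

namespace KdAux


def emb (d : ℕ) : Fin (d - 1) → Fin d := Fin.castLE (Nat.sub_le d 1)

def sig {d : ℕ} (x : Fin d → ℤ) : ℤ := ∑ i, x i

def wgt {d : ℕ} (x : Fin d → ℤ) : ℤ :=
  ∑ i : Fin (d - 1), ((i.val : ℤ) + 1) * x (emb d i)

variable {d : ℕ}

lemma sig_add (x y : Fin d → ℤ) : sig (x + y) = sig x + sig y := by
  simp [sig, Finset.sum_add_distrib]

lemma sig_sub (x y : Fin d → ℤ) : sig (x - y) = sig x - sig y := by
  simp [sig, Finset.sum_sub_distrib]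

lemma sig_neg (x : Fin d → ℤ) : sig (-x) = - sig x := by
  simp [sig]

lemma sig_smul (m : ℤ) (x : Fin d → ℤ) : sig (m • x) = m * sig x := by
  simp [sig, Finset.mul_sum]

lemma sig_zero : sig (0 : Fin d → ℤ) = 0 := by simp [sig]

lemma sig_single (k : Fin d) (r : ℤ) : sig (Pi.single k r) = r := by
  simp [sig, Finset.sum_pi_single']

lemma sig_sum {ι : Type*} (s : Finset ι) (f : ι → Fin d → ℤ) :
    sig (∑ j ∈ s, f j) = ∑ j ∈ s, sig (f j) := by
  simp only [sig, Finset.sum_apply]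
  rw [Finset.sum_comm]

lemma wgt_add (x y : Fin d → ℤ) : wgt (x + y) = wgt x + wgt y := by
  simp [wgt, mul_add, Finset.sum_add_distrib]

lemma wgt_sub (x y : Fin d → ℤ) : wgt (x - y) = wgt x - wgt y := by
  simp [wgt, mul_sub, Finset.sum_sub_distrib]

lemma wgt_neg (x : Fin d → ℤ) : wgt (-x) = - wgt x := by
  simp [wgt]

lemma wgt_smul (m : ℤ) (x : Fin d → ℤ) : wgt (m • x) = m * wgt x := by
  simp [wgt, Finset.mul_sum]; congr 1; funext i; ring

lemma wgt_zero : wgt (0 : Fin d → ℤ) = 0 := by simp [wgt]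

lemma wgt_sum {ι : Type*} (s : Finset ι) (f : ι → Fin d → ℤ) :
    wgt (∑ j ∈ s, f j) = ∑ j ∈ s, wgt (f j) := by
  simp only [wgt, Finset.sum_apply, Finset.mul_sum]
  rw [Finset.sum_comm]

lemma wgt_single_emb (j : Fin (d - 1)) (r : ℤ) :
    wgt (Pi.single (emb d j) r) = ((j.val : ℤ) + 1) * r := by
  unfold wgt
  rw [Finset.sum_eq_single j]
  · rw [Pi.single_eq_same]
  · intro b _ hb
    rw [Pi.single_eq_of_ne (by simpa [emb, Fin.castLE_inj] using hb), mul_zero]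
  · simp

lemma wgt_single_last (h : d - 1 < d) (r : ℤ) :
    wgt (Pi.single (⟨d - 1, h⟩ : Fin d) r) = 0 := by
  unfold wgt
  apply Finset.sum_eq_zero
  intro i _
  rw [Pi.single_eq_of_ne, mul_zero]
  intro hc
  have := congrArg Fin.val hc
  simp [emb, Fin.castLE] at this
  omega


def acoef (d : ℕ) (j : Fin (d - 1)) : ℤ :=
  if j.val = 0 then 2 * (d : ℤ) - 1
  else if Odd (j.val + 1) then -((j.val : ℤ) + 1)
  else 2 * (d : ℤ) - 1 - ((j.val : ℤ) + 1)

variable {d : ℕ}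

lemma single_castLE_ne {i : Fin d} (j : Fin (d - 1)) (r : ℤ)
    (h : i.val ≠ j.val) :
    (Pi.single (Fin.castLE (Nat.sub_le d 1) j) r : Fin d → ℤ) i = 0 := by
  apply Pi.single_eq_of_ne
  intro hc
  exact h (by simpa [Fin.castLE] using congrArg Fin.val hc)

lemma single_castLE_eq (j j' : Fin (d - 1)) (r : ℤ) (h : j'.val = j.val) :
    (Pi.single (Fin.castLE (Nat.sub_le d 1) j) r : Fin d → ℤ)
      (Fin.castLE (Nat.sub_le d 1) j') = r := by
  have : Fin.castLE (Nat.sub_le d 1) j' = Fin.castLE (Nat.sub_le d 1) j := Fin.ext h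
  rw [this, Pi.single_eq_same]

lemma uvec_last (h : d - 1 < d) (j : Fin (d - 1)) :
    uvecZ d j ⟨d - 1, h⟩ = 0 := by
  have key : ∀ j' : Fin (d - 1),
      (Pi.single (Fin.castLE (Nat.sub_le d 1) j') (1:ℤ) : Fin d → ℤ) ⟨d - 1, h⟩ = 0 := by
    intro j'
    exact single_castLE_ne j' 1 (by have := j'.isLt; simp; omega)
  unfold uvecZ
  split_ifs <;>
    simp only [Pi.smul_apply, Pi.sub_apply, Pi.add_apply, smul_eq_mul, key] <;> ring

lemma uvec_emb_zero (h0 : 0 < d - 1) (j : Fin (d - 1)) :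
    uvecZ d j (emb d ⟨0, h0⟩) = acoef d j := by
  unfold uvecZ acoef emb
  by_cases hj : j.val = 0
  · rw [if_pos hj, if_pos hj]
    simp only [Pi.smul_apply, smul_eq_mul]
    rw [single_castLE_eq j ⟨0, h0⟩ 1 hj.symm]
    ring
  · rw [if_neg hj, if_neg hj]
    have hz : (Pi.single (Fin.castLE (Nat.sub_le d 1) j) (1:ℤ) : Fin d → ℤ)
        (Fin.castLE (Nat.sub_le d 1) (⟨0, h0⟩ : Fin (d-1))) = 0 :=
      single_castLE_ne _ 1 (by simpa using Ne.symm hj)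
    split_ifs with h1 <;>
      simp only [Pi.sub_apply, Pi.add_apply, Pi.smul_apply, smul_eq_mul, hz,
        single_castLE_eq (⟨0, j.pos⟩ : Fin (d-1)) (⟨0, h0⟩ : Fin (d-1)) (1:ℤ) rfl] <;> ring

lemma uvec_emb_ne_zero (j j' : Fin (d - 1)) (hj' : j'.val ≠ 0) :
    uvecZ d j (emb d j') = if j = j' then 1 else 0 := by
  unfold uvecZ emb
  have hz : (Pi.single (Fin.castLE (Nat.sub_le d 1) (⟨0, j.pos⟩ : Fin (d-1))) (1:ℤ) : Fin d → ℤ)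
      (Fin.castLE (Nat.sub_le d 1) j') = 0 :=
    single_castLE_ne _ 1 (by simpa using hj')
  have hdiag : (Pi.single (Fin.castLE (Nat.sub_le d 1) j) (1:ℤ) : Fin d → ℤ)
      (Fin.castLE (Nat.sub_le d 1) j') = if j = j' then 1 else 0 := by
    rcases eq_or_ne j j' with rfl | hne
    · rw [if_pos rfl, Pi.single_eq_same]
    · rw [if_neg hne]
      exact single_castLE_ne _ 1 (fun hc => hne (Fin.ext hc.symm))
  by_cases h1 : j.val = 0
  · have hne : j ≠ j' := by intro hc; exact hj' (hc ▸ h1)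
    rw [if_pos h1, if_neg hne] at *
    simp only [Pi.smul_apply, smul_eq_mul, hdiag]
    ring
  · rw [if_neg h1]
    split_ifs with h2 h3 h3 <;>
      simp only [Pi.sub_apply, Pi.add_apply, Pi.smul_apply, smul_eq_mul, hz, hdiag] <;>
      first
        | (rw [if_pos h3]; ring)
        | (rw [if_neg h3]; ring)


lemma wgt_single_castLE (j : Fin (d - 1)) (r : ℤ) :
    wgt (Pi.single (Fin.castLE (Nat.sub_le d 1) j) r : Fin d → ℤ) = ((j.val : ℤ) + 1) * r :=
  wgt_single_emb j r

lemma sig_uvec (j : Fin (d - 1)) :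
    sig (uvecZ d j) = acoef d j + (if j.val = 0 then 0 else 1) := by
  unfold uvecZ acoef
  split_ifs with h1 h2
  · rw [sig_smul, sig_single]; ring
  · rw [sig_sub, sig_smul, sig_single, sig_single]; ring
  · rw [sig_add, sig_smul, sig_single, sig_single]; ring

lemma wgt_uvec (j : Fin (d - 1)) :
    wgt (uvecZ d j) = acoef d j + (if j.val = 0 then 0 else ((j.val : ℤ) + 1)) := by
  unfold uvecZ acoef
  have h0 : (((⟨0, _root_.Fin.pos j⟩ : Fin (d-1)).val : ℤ) + 1) = 1 := by simp
  split_ifs with h1 h2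
  · rw [wgt_smul, wgt_single_castLE]
    have : ((j.val : ℕ) : ℤ) = 0 := by exact_mod_cast h1
    rw [this]; ring
  · rw [wgt_sub, wgt_smul, wgt_single_castLE, wgt_single_castLE, h0]; ring
  · rw [wgt_add, wgt_smul, wgt_single_castLE, wgt_single_castLE, h0]; ring

lemma q_dvd_wgt_uvec (j : Fin (d - 1)) : (2 * (d : ℤ) - 1) ∣ wgt (uvecZ d j) := by
  rw [wgt_uvec]
  unfold acoef
  split_ifs with h1 h2
  · simp
  · have h : -((j.val:ℤ) + 1) + ((j.val:ℤ) + 1) = 0 := by ring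
    rw [h]
    exact dvd_zero _
  · have : 2 * (d:ℤ) - 1 - ((j.val:ℤ) + 1) + ((j.val:ℤ) + 1) = 2 * (d:ℤ) - 1 := by ring
    rw [this]

lemma even_sig_uvec (j : Fin (d - 1)) (hj : j.val ≠ 0) : Even (sig (uvecZ d j)) := by
  rw [sig_uvec, if_neg hj]
  unfold acoef
  rw [if_neg hj]
  split_ifs with h2
  · have h := Nat.odd_iff.mp h2
    rw [Int.even_iff]; omega
  · have h := Nat.even_iff.mp (Nat.not_odd_iff_even.mp h2)
    rw [Int.even_iff]; omega

lemma sig_uvec_zero (h0 : 0 < d - 1) : sig (uvecZ d ⟨0, h0⟩) = 2 * (d : ℤ) - 1 := by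
  rw [sig_uvec]
  unfold acoef
  simp

lemma mem_lambda_props (hd : 2 ≤ d) (n : Fin (d - 1) → ℕ) (c : ℕ)
    (hn1 : Even (n ⟨0, Nat.sub_pos_of_lt hd⟩)) (hcodd : Odd c)
    {v : Fin d → ℤ} (hv : v ∈ latticeLambda d hd n c) :
    Even (sig v) ∧ (2 * (d : ℤ) - 1) ∣ wgt v := by
  unfold latticeLambda at hv
  induction hv using AddSubgroup.closure_induction with
  | mem x hx =>
      rcases hx with ⟨j, rfl⟩ | hx
      · constructor
        · rw [sig_smul]
          by_cases hj : j.val = 0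
          · have hj' : j = ⟨0, by omega⟩ := Fin.ext hj
            rw [hj']
            exact (Int.even_coe_nat _ |>.mpr hn1).mul_right _
          · exact (even_sig_uvec j hj).mul_left _
        · rw [wgt_smul]
          exact (q_dvd_wgt_uvec j).mul_left _
      · rw [Set.mem_singleton_iff] at hx
        subst hx
        constructor
        · rw [sig_sub, sig_smul, sig_single, sig_sum]
          have h0 : (⟨0, by omega⟩ : Fin (d-1)) ∈ (Finset.univ : Finset (Fin (d-1))) :=
            Finset.mem_univ _
          rw [← Finset.add_sum_erase _ _ h0, sig_uvec_zero]
          have hE : Even (∑ j ∈ Finset.univ.erase (⟨0, by omega⟩ : Fin (d-1)),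
              sig (uvecZ d j)) := by
            apply Finset.sum_induction _ Even (fun a b => Even.add) Even.zero
            intro j hj
            apply even_sig_uvec
            intro hc
            exact (Finset.mem_erase.mp hj).1 (Fin.ext hc)
          obtain ⟨e, he⟩ := hE
          have hco := Nat.odd_iff.mp hcodd
          rw [he, Int.even_iff]
          omega
        · rw [wgt_sub, wgt_smul, wgt_single_last, wgt_sum, mul_zero, zero_sub]
          exact dvd_neg.mpr (Finset.dvd_sum fun j _ => q_dvd_wgt_uvec j)
  | zero => exact ⟨by rw [sig_zero]; exact Even.zero, by rw [wgt_zero]; exact dvd_zero _⟩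
  | add x y hx hy ihx ihy =>
      exact ⟨by rw [sig_add]; exact ihx.1.add ihy.1, by rw [wgt_add]; exact ihx.2.add ihy.2⟩
  | neg x hx ihx =>
      exact ⟨by rw [sig_neg]; exact ihx.1.neg, by rw [wgt_neg]; exact dvd_neg.mpr ihx.2⟩

lemma Kd_mem_iff {x : Fin d → ℤ} :
    x ∈ Kd d ↔ Even (sig x) ∨ (2 * (d : ℤ) - 1) ∣ wgt x := Iff.rfl

lemma Kd_add_mem {v x : Fin d → ℤ} (hE : Even (sig v)) (hw : (2 * (d : ℤ) - 1) ∣ wgt v) :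
    x + v ∈ Kd d ↔ x ∈ Kd d := by
  rw [Kd_mem_iff, Kd_mem_iff, sig_add, wgt_add]
  have h1 : Even (sig x + sig v) ↔ Even (sig x) := by
    obtain ⟨e, he⟩ := hE
    rw [Int.even_iff, Int.even_iff]
    omega
  have h2 : (2 * (d : ℤ) - 1) ∣ wgt x + wgt v ↔ (2 * (d : ℤ) - 1) ∣ wgt x :=
    ⟨fun h => by simpa using h.sub hw, fun h => h.add hw⟩
  rw [h1, h2]

lemma crt_finset {ι : Type*} [DecidableEq ι] (n : ι → ℕ) (b : ι → ℤ) (s : Finset ι)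
    (hcop : ∀ i ∈ s, ∀ j ∈ s, i ≠ j → Nat.Coprime (n i) (n j)) :
    ∃ x : ℤ, ∀ j ∈ s, (n j : ℤ) ∣ (b j - x) := by
  induction s using Finset.induction_on with
  | empty => exact ⟨0, by simp⟩
  | @insert a s ha ih =>
      obtain ⟨x, hx⟩ := ih fun i hi j hj hij =>
        hcop i (Finset.mem_insert_of_mem hi) j (Finset.mem_insert_of_mem hj) hij
      have hcp : IsCoprime ((n a : ℤ)) (∏ j ∈ s, (n j : ℤ)) := by
        rw [show (∏ j ∈ s, (n j : ℤ)) = ((∏ j ∈ s, n j : ℕ) : ℤ) by push_cast; rfl]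
        apply Nat.Coprime.isCoprime
        apply Nat.Coprime.prod_right
        intro j hj
        exact hcop a (Finset.mem_insert_self a s) j (Finset.mem_insert_of_mem hj)
          (fun hc => ha (hc ▸ hj))
      obtain ⟨u, w, huw⟩ := hcp
      set P : ℤ := ∏ j ∈ s, (n j : ℤ) with hP
      refine ⟨b a * (w * P) + x * (u * (n a : ℤ)), ?_⟩
      intro j hj
      rcases Finset.mem_insert.mp hj with rfl | hj'
      · refine ⟨u * (b j - x), ?_⟩
        linear_combination (-(b j)) * huw
      · have key : b j - (b a * (w * P) + x * (u * (n a : ℤ)))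
            = (b j - x) + ((x - b a) * w) * P := by linear_combination (-x) * huw
        rw [key]
        exact dvd_add (hx j hj')
          (Dvd.dvd.mul_left (Finset.dvd_prod_of_mem (fun i => ((n i : ℤ))) hj') _)

lemma abs_single_sum (e : Fin d) (s : ℤ) : (∑ i, |Pi.single e s i|) = |s| := by
  rw [Finset.sum_eq_single e]
  · rw [Pi.single_eq_same]
  · intro b _ hb
    rw [Pi.single_eq_of_ne hb, abs_zero]
  · simp

lemma l1_single (e : Fin d) (a : Fin d → ℤ) (s : ℤ) (hs : |s| = 1) :
    (∑ i, |a i - (a + s • Pi.single e 1 : Fin d → ℤ) i|) = 1 := by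
  have h : ∀ i, a i - (a + s • Pi.single e 1 : Fin d → ℤ) i = (Pi.single e (-s) : Fin d → ℤ) i := by
    intro i
    rcases eq_or_ne i e with rfl | hne
    · simp [Pi.single_eq_same]
    · simp [Pi.single_eq_of_ne hne]
  rw [Finset.sum_congr rfl (fun i _ => by rw [h i]), abs_single_sum, abs_neg, hs]

lemma pivot (hd : 2 ≤ d) {x : Fin d → ℤ} (hx : ¬ ((2 * (d:ℤ) - 1) ∣ wgt x)) :
    ∃ (e : Fin d) (s : ℤ), |s| = 1 ∧ (2 * (d:ℤ) - 1) ∣ wgt (x + s • Pi.single e 1) := by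
  have hqpos : 0 < 2 * (d:ℤ) - 1 := by
    have : (2:ℤ) ≤ (d:ℤ) := by exact_mod_cast hd
    linarith
  set r := wgt x % (2 * (d:ℤ) - 1) with hr
  have hr0 : 0 ≤ r := Int.emod_nonneg _ (ne_of_gt hqpos)
  have hrq : r < 2 * (d:ℤ) - 1 := Int.emod_lt_of_pos _ hqpos
  have hrne : r ≠ 0 := fun hc => hx (Int.dvd_of_emod_eq_zero (by rw [← hr]; exact hc))
  have hdvd : (2 * (d:ℤ) - 1) ∣ wgt x - r := Int.dvd_self_sub_of_emod_eq hr.symm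
  have hcast : (r.toNat : ℤ) = r := Int.toNat_of_nonneg hr0
  by_cases hcase : r.toNat ≤ d - 1
  · have hk : r.toNat - 1 < d - 1 := by omega
    refine ⟨emb d ⟨r.toNat - 1, hk⟩, -1, by norm_num, ?_⟩
    rw [wgt_add, wgt_smul, wgt_single_emb]
    have : (-1 : ℤ) * ((((⟨r.toNat - 1, hk⟩ : Fin (d-1)).val : ℤ) + 1) * 1) = -r := by
      simp only [Fin.val_mk]
      omega
    rw [this]
    exact hdvd
  · have hup : r.toNat < 2 * d - 1 := by omega
    have hk : 2 * d - 2 - r.toNat < d - 1 := by omega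
    refine ⟨emb d ⟨2 * d - 2 - r.toNat, hk⟩, 1, by norm_num, ?_⟩
    rw [wgt_add, wgt_smul, wgt_single_emb]
    have : (1 : ℤ) * ((((⟨2 * d - 2 - r.toNat, hk⟩ : Fin (d-1)).val : ℤ) + 1) * 1)
        = (2 * (d:ℤ) - 1) - r := by
      simp only [Fin.val_mk]
      omega
    rw [this]
    have : wgt x + (2 * (d:ℤ) - 1 - r) = (wgt x - r) + (2 * (d:ℤ) - 1) := by ring
    rw [this]
    exact dvd_add hdvd dvd_rfl

lemma gen_mem_range (hd : 2 ≤ d) (n : Fin (d - 1) → ℕ) (c : ℕ) (j : Fin (d - 1)) :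
    (n j : ℤ) • uvecZ d j ∈ latticeLambda d hd n c := by
  unfold latticeLambda
  exact AddSubgroup.subset_closure (Set.mem_union_left _ ⟨j, rfl⟩)

lemma gen_mem_g (hd : 2 ≤ d) (n : Fin (d - 1) → ℕ) (c : ℕ) (h : d - 1 < d) :
    (c : ℤ) • (Pi.single (⟨d - 1, h⟩ : Fin d) 1 : Fin d → ℤ) - ∑ j : Fin (d - 1), uvecZ d j
      ∈ latticeLambda d hd n c := by
  unfold latticeLambda
  exact AddSubgroup.subset_closure (Set.mem_union_right _ rfl)

lemma main_claim (hd : 2 ≤ d) (n : Fin (d - 1) → ℕ)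
    (hcop : Pairwise fun i j => Nat.Coprime (n i) (n j)) (c : ℕ)
    {v : Fin d → ℤ} (hv : (2 * (d:ℤ) - 1) ∣ wgt v) :
    ∃ m : ℤ, v - m • (Pi.single (⟨d - 1, Nat.sub_lt (by omega) one_pos⟩ : Fin d) (1:ℤ) :
      Fin d → ℤ) ∈ latticeLambda d hd n c := by
  have h1d : 0 < d - 1 := by omega
  have hlast : d - 1 < d := Nat.sub_lt (by omega) one_pos
  set q : ℤ := 2 * (d:ℤ) - 1 with hq
  set ed : Fin d → ℤ := Pi.single (⟨d - 1, hlast⟩ : Fin d) 1 with hed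
  set U : Fin d → ℤ := ∑ j : Fin (d - 1), uvecZ d j with hU
  set g : Fin d → ℤ := (c : ℤ) • ed - U with hg
  set vd : ℤ := v ⟨d - 1, hlast⟩ with hvd
  set V : Fin d → ℤ := v - vd • ed + vd • U with hV
  have hUlast : U ⟨d - 1, hlast⟩ = 0 := by
    rw [hU, Finset.sum_apply]
    exact Finset.sum_eq_zero fun j _ => uvec_last hlast j
  have hVlast : V ⟨d - 1, hlast⟩ = 0 := by
    rw [hV]
    simp only [Pi.add_apply, Pi.sub_apply, Pi.smul_apply, smul_eq_mul, hUlast, hed,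
      Pi.single_eq_same, mul_zero, mul_one]
    rw [← hvd]
    ring
  have hwed : wgt ed = 0 := by rw [hed]; exact wgt_single_last hlast 1
  have hwU : q ∣ wgt U := by
    rw [hU, wgt_sum]
    exact Finset.dvd_sum fun j _ => q_dvd_wgt_uvec j
  have hwV : q ∣ wgt V := by
    rw [hV, wgt_add, wgt_sub, wgt_smul, wgt_smul, hwed, mul_zero, sub_zero]
    exact dvd_add hv (hwU.mul_left _)
  set i0 : Fin (d - 1) := ⟨0, h1d⟩ with hi0
  set num : ℤ := V (emb d i0) - ∑ j ∈ Finset.univ.erase i0, acoef d j * V (emb d j) with hnumdef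
  have hwV' : wgt V = V (emb d i0)
      + ∑ j ∈ Finset.univ.erase i0, ((j.val : ℤ) + 1) * V (emb d j) := by
    unfold wgt
    rw [← Finset.add_sum_erase _ _ (Finset.mem_univ i0)]
    norm_num [hi0]
  have hacoef : ∀ j : Fin (d - 1), j.val ≠ 0 → q ∣ (acoef d j + ((j.val : ℤ) + 1)) := by
    intro j hj
    unfold acoef
    rw [if_neg hj]
    split_ifs with h2
    · have h0 : -((j.val:ℤ) + 1) + ((j.val:ℤ) + 1) = 0 := by ring
      rw [h0]
      exact dvd_zero _
    · have : 2 * (d:ℤ) - 1 - ((j.val:ℤ) + 1) + ((j.val:ℤ) + 1) = q := by rw [hq]; ring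
      rw [this]
  have hnum : q ∣ num := by
    have expand : ∑ j ∈ Finset.univ.erase i0, (acoef d j + ((j.val:ℤ)+1)) * V (emb d j)
        = ∑ j ∈ Finset.univ.erase i0, acoef d j * V (emb d j)
          + ∑ j ∈ Finset.univ.erase i0, ((j.val:ℤ)+1) * V (emb d j) := by
      rw [← Finset.sum_add_distrib]
      exact Finset.sum_congr rfl fun j _ => by ring
    have key : num = wgt V
        - ∑ j ∈ Finset.univ.erase i0, (acoef d j + ((j.val:ℤ)+1)) * V (emb d j) := by
      rw [hnumdef, hwV', expand]; ring
    rw [key]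
    refine dvd_sub hwV (Finset.dvd_sum fun j hj => ?_)
    exact (hacoef j fun hc => (Finset.mem_erase.mp hj).1 (Fin.ext hc)).mul_right _
  set b : Fin (d - 1) → ℤ := fun j => if j.val = 0 then num / q else V (emb d j) with hb
  have hVb : V = ∑ j, b j • uvecZ d j := by
    funext i
    rw [Finset.sum_apply]
    by_cases hi : i.val < d - 1
    · have hij : i = emb d ⟨i.val, hi⟩ := Fin.ext rfl
      by_cases h0 : i.val = 0
      · have hj0 : (⟨i.val, hi⟩ : Fin (d-1)) = i0 := Fin.ext h0
        rw [hij, hj0]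
        have hterm : ∀ j : Fin (d - 1), (b j • uvecZ d j) (emb d i0) = b j * acoef d j := by
          intro j
          rw [Pi.smul_apply, smul_eq_mul, hi0, uvec_emb_zero h1d]
        rw [Finset.sum_congr rfl fun j _ => hterm j,
          ← Finset.add_sum_erase _ _ (Finset.mem_univ i0)]
        have hb0 : b i0 = num / q := by rw [hb]; simp [hi0]
        have hA0 : acoef d i0 = q := by unfold acoef; simp [hi0, hq]
        have hbe : ∀ j ∈ Finset.univ.erase i0,
            b j * acoef d j = acoef d j * V (emb d j) := by
          intro j hj
          have hjv : j.val ≠ 0 := fun hc => (Finset.mem_erase.mp hj).1 (Fin.ext hc)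
          rw [hb]
          simp only [if_neg hjv]
          ring
        rw [Finset.sum_congr rfl hbe, hb0, hA0, Int.ediv_mul_cancel hnum, hnumdef]
        ring
      · rw [hij]
        rw [Finset.sum_eq_single (⟨i.val, hi⟩ : Fin (d-1))]
        · rw [Pi.smul_apply, smul_eq_mul, uvec_emb_ne_zero _ _ h0, if_pos rfl, mul_one, hb]
          simp only [if_neg h0]
        · intro j _ hjne
          rw [Pi.smul_apply, smul_eq_mul, uvec_emb_ne_zero j _ h0, if_neg hjne, mul_zero]
        · simp
    · have hieq : i = ⟨d - 1, hlast⟩ := Fin.ext (by show i.val = d - 1; have := i.isLt; omega)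
      rw [hieq, hVlast]
      symm
      exact Finset.sum_eq_zero fun j _ => by
        rw [Pi.smul_apply, smul_eq_mul, uvec_last hlast, mul_zero]
  obtain ⟨x, hx⟩ := crt_finset n b Finset.univ fun i _ j _ hij => hcop hij
  set cc : Fin (d - 1) → ℤ := fun j => (b j - x) / (n j : ℤ) with hcc
  have hccn : ∀ j, cc j * (n j : ℤ) = b j - x := fun j =>
    Int.ediv_mul_cancel (hx j (Finset.mem_univ j))
  refine ⟨x * (c:ℤ) + vd * (1 - (c:ℤ)), ?_⟩
  have hsum : (∑ j, cc j • ((n j : ℤ) • uvecZ d j)) = V - x • U := by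
    have h1 : ∀ j : Fin (d - 1), cc j • ((n j : ℤ) • uvecZ d j) = (b j - x) • uvecZ d j := by
      intro j
      rw [smul_smul, hccn j]
    have h2 : ∑ j, (b j - x) • uvecZ d j
        = (∑ j, b j • uvecZ d j) - x • ∑ j, uvecZ d j := by
      rw [Finset.smul_sum, ← Finset.sum_sub_distrib]
      exact Finset.sum_congr rfl fun j _ => by rw [sub_smul]
    rw [Finset.sum_congr rfl fun j _ => h1 j, h2, ← hVb, ← hU]
  have hkey : v - (x * (c:ℤ) + vd * (1 - (c:ℤ))) • ed
      = (∑ j, cc j • ((n j : ℤ) • uvecZ d j)) + (vd - x) • g := by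
    rw [hsum, hg, hV]
    module
  show v - (x * (c:ℤ) + vd * (1 - (c:ℤ))) • ed ∈ latticeLambda d hd n c
  rw [hkey]
  refine AddSubgroup.add_mem _ ?_ ?_
  · exact AddSubgroup.sum_mem _ fun j _ => AddSubgroup.zsmul_mem _ (gen_mem_range hd n c j) _
  · exact AddSubgroup.zsmul_mem _ (by rw [hg, hed, hU]; exact gen_mem_g hd n c hlast) _

section Paths

variable {d : ℕ} (Λ : AddSubgroup (Fin d → ℤ))

/-- The step relation used in `ConnectedIn` for the image of `Kd`. -/
def stepRel : ((Fin d → ℤ) ⧸ Λ) → ((Fin d → ℤ) ⧸ Λ) → Prop :=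
  fun a b => torusAdj d Λ a b ∧
    a ∈ ((QuotientAddGroup.mk : (Fin d → ℤ) → (Fin d → ℤ) ⧸ Λ) '' Kd d) ∧
    b ∈ ((QuotientAddGroup.mk : (Fin d → ℤ) → (Fin d → ℤ) ⧸ Λ) '' Kd d)

lemma step_symm : Symmetric (stepRel Λ) := by
  rintro a b ⟨⟨p, r, h1, h2, h3⟩, ha, hb⟩
  exact ⟨⟨r, p, h2, h1, by
    rw [← h3]; exact Finset.sum_congr rfl fun i _ => abs_sub_comm _ _⟩, hb, ha⟩

lemma mem_S_of {x : Fin d → ℤ} (hx : x ∈ Kd d) :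
    (QuotientAddGroup.mk x : (Fin d → ℤ) ⧸ Λ) ∈
      ((QuotientAddGroup.mk : (Fin d → ℤ) → (Fin d → ℤ) ⧸ Λ) '' Kd d) :=
  ⟨x, hx, rfl⟩

lemma line_mem {z : Fin d → ℤ} (hz : (2 * (d:ℤ) - 1) ∣ wgt z) (h : d - 1 < d) (t : ℤ) :
    z + t • (Pi.single (⟨d - 1, h⟩ : Fin d) 1 : Fin d → ℤ) ∈ Kd d := by
  rw [Kd_mem_iff]
  right
  rw [wgt_add, wgt_smul, wgt_single_last, mul_zero, add_zero]
  exact hz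

lemma line_path {z : Fin d → ℤ} (hz : (2 * (d:ℤ) - 1) ∣ wgt z) (h : d - 1 < d) (m : ℤ) :
    Relation.ReflTransGen (stepRel Λ) (QuotientAddGroup.mk z)
      (QuotientAddGroup.mk (z + m • (Pi.single (⟨d - 1, h⟩ : Fin d) 1 : Fin d → ℤ))) := by
  set e1 : Fin d → ℤ := Pi.single (⟨d - 1, h⟩ : Fin d) 1 with he1
  induction m using Int.induction_on with
  | zero =>
      have : z + (0:ℤ) • e1 = z := by rw [zero_smul, add_zero]
      rw [this]
  | succ k ih =>
      refine ih.tail ?_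
      have hyeq : (z + (k:ℤ) • e1) + (1:ℤ) • e1 = z + ((k:ℤ) + 1) • e1 := by module
      refine ⟨⟨z + (k:ℤ) • e1, (z + (k:ℤ) • e1) + (1:ℤ) • e1, rfl, congrArg _ hyeq,
        l1_single _ _ 1 (by norm_num)⟩, mem_S_of Λ (line_mem hz h k),
        mem_S_of Λ (line_mem hz h ((k:ℤ) + 1))⟩
  | pred k ih =>
      refine ih.tail ?_
      have hyeq : (z + (-(k:ℤ)) • e1) + (-1:ℤ) • e1 = z + (-(k:ℤ) - 1) • e1 := by module
      refine ⟨⟨z + (-(k:ℤ)) • e1, (z + (-(k:ℤ)) • e1) + (-1:ℤ) • e1, rfl, congrArg _ hyeq,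
        l1_single _ _ (-1) (by norm_num)⟩, mem_S_of Λ (line_mem hz h (-(k:ℤ))),
        mem_S_of Λ (line_mem hz h (-(k:ℤ) - 1))⟩

lemma to_good (hd : 2 ≤ d) {x : Fin d → ℤ} (hx : x ∈ Kd d) :
    ∃ z : Fin d → ℤ, z ∈ Kd d ∧ (2 * (d:ℤ) - 1) ∣ wgt z ∧
      Relation.ReflTransGen (stepRel Λ) (QuotientAddGroup.mk x) (QuotientAddGroup.mk z) := by
  by_cases hq : (2 * (d:ℤ) - 1) ∣ wgt x
  · exact ⟨x, hx, hq, Relation.ReflTransGen.refl⟩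
  · obtain ⟨e, s, hs, hz⟩ := pivot hd hq
    have hzK : x + s • Pi.single e 1 ∈ Kd d := Kd_mem_iff.mpr (Or.inr hz)
    refine ⟨x + s • Pi.single e 1, hzK, hz, Relation.ReflTransGen.single ?_⟩
    exact ⟨⟨x, x + s • Pi.single e 1, rfl, rfl, l1_single e x s hs⟩,
      mem_S_of Λ hx, mem_S_of Λ hzK⟩

end Paths

end KdAux

/-- For pairwise coprime positive integers `n₁,…,n_{d−1}` with `n₁` even and an odd
positive integer `c`: (i) `K_d` is invariant under translation by the lattice `Λ`
generated by `n₁u₁,…,n_{d−1}u_{d−1}` and `c·e_d − Σᵢuᵢ`; and (ii) the image of `K_d`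
in `ℤ^d/Λ` is rook-connected. -/
theorem Kd_quotient_connected (d : ℕ) (hd : 2 ≤ d) (n : Fin (d - 1) → ℕ)
    (hpos : ∀ i, 0 < n i) (hcop : Pairwise fun i j => Nat.Coprime (n i) (n j))
    (hn1 : Even (n ⟨0, by omega⟩)) (c : ℕ) (hc : 0 < c) (hcodd : Odd c) :
    (∀ v ∈ latticeLambda d hd n c, (fun x => x + v) '' Kd d = Kd d) ∧
    ConnectedIn (torusAdj d (latticeLambda d hd n c))
      ((QuotientAddGroup.mk : (Fin d → ℤ) → (Fin d → ℤ) ⧸ latticeLambda d hd n c) ''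
        Kd d) := by
  constructor
  · -- Part (i): translation invariance
    intro v hv
    obtain ⟨hE, hw⟩ := KdAux.mem_lambda_props hd n c hn1 hcodd hv
    ext x
    simp only [Set.mem_image]
    constructor
    · rintro ⟨y, hy, rfl⟩
      exact (KdAux.Kd_add_mem hE hw).mpr hy
    · intro hx
      exact ⟨x - v, (KdAux.Kd_add_mem hE hw).mp (by rwa [sub_add_cancel]), sub_add_cancel x v⟩
  · -- Part (ii): connectivity
    constructor
    · refine ⟨QuotientAddGroup.mk 0, 0, Or.inl ?_, rfl⟩
      simp
    · rintro a ⟨xa, hxa, rfl⟩ b ⟨xb, hxb, rfl⟩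
      obtain ⟨za, hzaK, hza, ta⟩ := KdAux.to_good (latticeLambda d hd n c) hd hxa
      obtain ⟨zb, hzbK, hzb, tb⟩ := KdAux.to_good (latticeLambda d hd n c) hd hxb
      have hsub : (2 * (d:ℤ) - 1) ∣ KdAux.wgt (zb - za) := by
        rw [KdAux.wgt_sub]
        exact dvd_sub hzb hza
      obtain ⟨m, hm⟩ := KdAux.main_claim hd n hcop c hsub
      have hlast : d - 1 < d := Nat.sub_lt (by omega) one_pos
      set e1 : Fin d → ℤ := Pi.single (⟨d - 1, hlast⟩ : Fin d) 1 with he1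
      have heq : (QuotientAddGroup.mk (za + m • e1) :
          (Fin d → ℤ) ⧸ latticeLambda d hd n c) = QuotientAddGroup.mk zb := by
        apply QuotientAddGroup.eq.mpr
        have hrw : -(za + m • e1) + zb = (zb - za) - m • e1 := by module
        rw [hrw]
        exact hm
      have t2 := KdAux.line_path (latticeLambda d hd n c) hza hlast m
      rw [heq] at t2
      have tbs := (@Relation.ReflTransGen.symmetric _ _
        ⟨KdAux.step_symm (latticeLambda d hd n c)⟩).symm _ _ tb
      exact (ta.trans t2).trans tbs
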